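/- Let (k,l) ∈ PC and let Z be the associated fundamental solution with spatial Fourier transform Ẑ(t,ξ) = s(t,|ξ|²). Then the mean square displacement m(t) = ∫_{ℝ^d}|x|² Z(t,x) dx satisfies m(t) = 2d·(1∗l)(t) for all t > 0; equivalently, the Laplace transform of m is m̂(λ) = 2d·l̂(λ)/λ. -/

import Mathlib

open MeasureTheory Filter Real

lemma msd_aux_sin_div : Tendsto (fun v : ℝ => Real.sin v / v)
    (nhdsWithin 0 {(0:ℝ)}ᶜ) (nhds 1) := by
  have h := hasDerivAt_iff_tendsto_slope.mp (Real.hasDerivAt_sin 0)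
  simp only [Real.cos_zero] at h
  have hs : (slope Real.sin 0) = fun v => Real.sin v / v := by
    funext v; simp [slope, Real.sin_zero, div_eq_inv_mul]
  rwa [hs] at h

lemma msd_aux_one_sub_cos_div_sq : Tendsto (fun v : ℝ => (1 - Real.cos v) / v ^ 2)
    (nhdsWithin 0 {(0:ℝ)}ᶜ) (nhds (1/2)) := by
  have h1 : Tendsto (fun v : ℝ => v / 2) (nhdsWithin 0 {(0:ℝ)}ᶜ) (nhdsWithin 0 {(0:ℝ)}ᶜ) := by
    rw [tendsto_nhdsWithin_iff]
    constructor
    · simpa using (tendsto_id (x := nhdsWithin (0:ℝ) {(0:ℝ)}ᶜ)).mono_right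
        nhdsWithin_le_nhds |>.div_const 2
    · filter_upwards [self_mem_nhdsWithin] with v hv
      simp only [Set.mem_compl_iff, Set.mem_singleton_iff] at hv ⊢
      intro h; exact hv (by linarith)
  have h2 : Tendsto (fun v : ℝ => Real.sin (v/2) / (v/2)) (nhdsWithin 0 {(0:ℝ)}ᶜ) (nhds 1) :=
    msd_aux_sin_div.comp h1
  have h3 : Tendsto (fun v : ℝ => (Real.sin (v/2) / (v/2))^2 / 2)
      (nhdsWithin 0 {(0:ℝ)}ᶜ) (nhds (1/2)) := by
    simpa using ((h2.pow 2).div_const 2)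
  refine h3.congr' ?_
  filter_upwards [self_mem_nhdsWithin] with v hv
  simp only [Set.mem_compl_iff, Set.mem_singleton_iff] at hv
  have hsin : Real.sin (v/2)^2 = 1/2 - Real.cos v / 2 := by
    have := Real.sin_sq_eq_half_sub (v/2)
    rwa [mul_div_cancel₀ _ (by norm_num : (2:ℝ) ≠ 0)] at this
  field_simp [div_pow]
  linear_combination 2 * hsin

lemma msd_aux_ptwise (a : ℝ) : Tendsto (fun μ : ℝ => (1 - Real.cos (Real.sqrt μ * a)) / μ)
    (nhdsWithin 0 (Set.Ioi 0)) (nhds (a ^ 2 / 2)) := by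
  rcases eq_or_ne a 0 with rfl | ha
  · simp only [mul_zero, Real.cos_zero, sub_self, zero_div]
    simpa using tendsto_const_nhds
  · have hmap : Tendsto (fun μ : ℝ => Real.sqrt μ * a) (nhdsWithin 0 (Set.Ioi 0))
        (nhdsWithin 0 {(0:ℝ)}ᶜ) := by
      rw [tendsto_nhdsWithin_iff]
      constructor
      · have : Tendsto (fun μ : ℝ => Real.sqrt μ * a) (nhds 0) (nhds 0) := by
          simpa using (Real.continuous_sqrt.tendsto 0).mul_const a
        exact this.mono_left nhdsWithin_le_nhds
      · filter_upwards [self_mem_nhdsWithin] with μ hμ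
        simp only [Set.mem_compl_iff, Set.mem_singleton_iff]
        exact mul_ne_zero (Real.sqrt_ne_zero'.mpr hμ) ha
    have h2 : Tendsto (fun μ : ℝ => a^2 * ((1 - Real.cos (Real.sqrt μ * a)) / (Real.sqrt μ * a)^2))
        (nhdsWithin 0 (Set.Ioi 0)) (nhds (a^2 * (1/2))) :=
      (msd_aux_one_sub_cos_div_sq.comp hmap).const_mul _
    have h3 : a^2 * (1/2) = a^2/2 := by ring
    rw [h3] at h2
    refine h2.congr' ?_
    filter_upwards [self_mem_nhdsWithin] with μ hμ
    have hμ' : (0:ℝ) < μ := hμ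
    rw [mul_pow, Real.sq_sqrt hμ'.le]
    field_simp

theorem mean_square_displacement_formula
    (d : ℕ) (hd : 1 ≤ d)
    (k l : ℝ → ℝ)
    (hk_loc : LocallyIntegrableOn k (Set.Ici 0))
    (hl_loc : LocallyIntegrableOn l (Set.Ici 0))
    (hk_nonneg : ∀ t, 0 < t → 0 ≤ k t)
    (hk_anti : AntitoneOn k (Set.Ioi 0))
    (hkl : ∀ t, 0 < t → (∫ τ in (0:ℝ)..t, k (t - τ) * l τ) = 1)
    (s : ℝ → ℝ → ℝ)
    (hvolterra : ∀ μ ≥ (0:ℝ), ∀ t ≥ (0:ℝ),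
      s t μ + μ * (∫ τ in (0:ℝ)..t, l (t - τ) * s τ μ) = 1)
    (Z : ℝ → EuclideanSpace ℝ (Fin d) → ℝ)
    (hZnn : ∀ t > (0:ℝ), ∀ x, 0 ≤ Z t x)
    (hZint : ∀ t > (0:ℝ), Integrable (Z t))
    (hZpdf : ∀ t > (0:ℝ), (∫ x, Z t x) = 1)
    (hZmsd : ∀ t > (0:ℝ), Integrable (fun x => ‖x‖ ^ 2 * Z t x))
    (hhat : ∀ t > (0:ℝ), ∀ ξ : EuclideanSpace ℝ (Fin d),
      (∫ x, Complex.exp (-Complex.I * ((inner ℝ x ξ : ℝ) : ℂ)) * (Z t x : ℂ)) =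
        ((s t (‖ξ‖ ^ 2) : ℝ) : ℂ)) :
    ∀ t > (0:ℝ), (∫ x, ‖x‖ ^ 2 * Z t x) = 2 * d * ∫ τ in (0:ℝ)..t, l τ := by
  intro t ht
  have hZm : ∀ τ, 0 < τ → AEStronglyMeasurable (Z τ) volume :=
    fun τ hτ => (hZint τ hτ).aestronglyMeasurable
  -- continuity of inner with fixed right argument
  have hcont : ∀ ξ : EuclideanSpace ℝ (Fin d), Continuous fun x : EuclideanSpace ℝ (Fin d) => (inner ℝ x ξ : ℝ) :=
    fun ξ => continuous_id.inner continuous_const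
  -- integrability of cos * Z
  have hcosint : ∀ τ, 0 < τ → ∀ g : EuclideanSpace ℝ (Fin d) → ℝ, Continuous g →
      Integrable (fun x => Real.cos (g x) * Z τ x) := by
    intro τ hτ g hg
    refine Integrable.mono ((hZint τ hτ).norm)
      (((Real.continuous_cos.comp hg).aestronglyMeasurable).mul (hZm τ hτ)) ?_
    filter_upwards with x
    rw [norm_mul, norm_norm]
    calc ‖Real.cos (g x)‖ * ‖Z τ x‖ ≤ 1 * ‖Z τ x‖ := by
          apply mul_le_mul_of_nonneg_right _ (norm_nonneg _)
          rw [Real.norm_eq_abs]; exact Real.abs_cos_le_one _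
      _ = ‖Z τ x‖ := one_mul _
  -- Step A: cosine representation
  have hcos : ∀ τ, 0 < τ → ∀ ξ : EuclideanSpace ℝ (Fin d),
      (∫ x, Real.cos ((inner ℝ x ξ : ℝ)) * Z τ x) = s τ (‖ξ‖^2) := by
    intro τ hτ ξ
    have hre : ∀ (r c : ℝ), (Complex.exp (-Complex.I * (r:ℂ)) * (c:ℂ)).re = Real.cos r * c := by
      intro r c
      rw [show -Complex.I * (r:ℂ) = ((-r : ℝ):ℂ) * Complex.I by push_cast; ring,
        Complex.exp_mul_I]
      simp [Complex.cos_ofReal_re]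
    have hint : Integrable
        (fun x => Complex.exp (-Complex.I * ((inner ℝ x ξ : ℝ):ℂ)) * (Z τ x : ℂ)) := by
      refine Integrable.mono ((hZint τ hτ).norm) ?_ ?_
      · exact ((Complex.continuous_exp.comp
          ((continuous_const.mul (Complex.continuous_ofReal.comp (hcont ξ))))).aestronglyMeasurable).mul
          (Complex.continuous_ofReal.comp_aestronglyMeasurable (hZm τ hτ))
      · filter_upwards with x
        rw [norm_mul, norm_norm]
        have h1 : ‖Complex.exp (-Complex.I * ((inner ℝ x ξ : ℝ):ℂ))‖ = 1 := by
          rw [show -Complex.I * (((inner ℝ x ξ : ℝ):ℝ):ℂ) = ((-(inner ℝ x ξ : ℝ) : ℝ):ℂ) * Complex.I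
            by push_cast; ring]
          exact Complex.norm_exp_ofReal_mul_I _
        rw [h1, one_mul, Complex.norm_real]
    have h2 := integral_re (μ := (volume : Measure (EuclideanSpace ℝ (Fin d)))) hint
    rw [hhat τ hτ ξ] at h2
    simp only [RCLike.re_to_complex, Complex.ofReal_re] at h2
    rw [← h2]
    congr 1
    funext x
    exact (hre _ _).symm
  -- representation via a unit vector, scaled
  have hrep : ∀ τ, 0 < τ → ∀ μ : ℝ, 0 ≤ μ → ∀ e : EuclideanSpace ℝ (Fin d), ‖e‖ = 1 →
      s τ μ = ∫ x, Real.cos (Real.sqrt μ * (inner ℝ x e : ℝ)) * Z τ x := by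
    intro τ hτ μ hμ e he
    have hnorm : ‖(Real.sqrt μ) • e‖^2 = μ := by
      rw [norm_smul, he, mul_one, Real.norm_eq_abs, sq_abs, Real.sq_sqrt hμ]
    have := hcos τ hτ ((Real.sqrt μ) • e)
    rw [hnorm] at this
    rw [← this]
    congr 1
    funext x
    rw [real_inner_smul_right]
  -- difference representation
  have h1sub : ∀ τ, 0 < τ → ∀ μ : ℝ, 0 ≤ μ → ∀ e : EuclideanSpace ℝ (Fin d), ‖e‖ = 1 →
      1 - s τ μ = ∫ x, (1 - Real.cos (Real.sqrt μ * (inner ℝ x e : ℝ))) * Z τ x := by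
    intro τ hτ μ hμ e he
    have hci : Integrable (fun x => Real.cos (Real.sqrt μ * (inner ℝ x e : ℝ)) * Z τ x) :=
      hcosint τ hτ _ (continuous_const.mul (hcont e))
    rw [hrep τ hτ μ hμ e he]
    nth_rewrite 1 [← hZpdf τ hτ]
    rw [← integral_sub (hZint τ hτ) hci]
    congr 1
    funext x
    ring
  -- nonnegativity of 1 - s
  have hb0 : ∀ τ, 0 < τ → ∀ μ : ℝ, 0 ≤ μ → ∀ e : EuclideanSpace ℝ (Fin d), ‖e‖ = 1 →
      0 ≤ 1 - s τ μ := by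
    intro τ hτ μ hμ e he
    rw [h1sub τ hτ μ hμ e he]
    apply integral_nonneg
    intro x
    apply mul_nonneg _ (hZnn τ hτ x)
    have := Real.cos_le_one (Real.sqrt μ * (inner ℝ x e : ℝ))
    linarith
  -- upper bound
  have hub : ∀ τ, 0 < τ → ∀ μ : ℝ, 0 ≤ μ → ∀ e : EuclideanSpace ℝ (Fin d), ‖e‖ = 1 →
      1 - s τ μ ≤ μ/2 * ∫ x, ‖x‖^2 * Z τ x := by
    intro τ hτ μ hμ e he
    rw [h1sub τ hτ μ hμ e he]
    have hci : Integrable (fun x => (1 - Real.cos (Real.sqrt μ * (inner ℝ x e : ℝ))) * Z τ x) := by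
      have hci' : Integrable (fun x => Real.cos (Real.sqrt μ * (inner ℝ x e : ℝ)) * Z τ x) :=
        hcosint τ hτ _ (continuous_const.mul (hcont e))
      have := (hZint τ hτ).sub hci'
      refine this.congr ?_
      filter_upwards with x
      simp only [Pi.sub_apply]
      ring
    have hmono : ∀ x, (1 - Real.cos (Real.sqrt μ * (inner ℝ x e : ℝ))) * Z τ x ≤
        μ/2 * (‖x‖^2 * Z τ x) := by
      intro x
      set a := (inner ℝ x e : ℝ) with ha
      have h1 : 1 - Real.cos (Real.sqrt μ * a) ≤ (Real.sqrt μ * a)^2/2 := by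
        linarith [Real.one_sub_sq_div_two_le_cos (x := Real.sqrt μ * a)]
      have h2 : (Real.sqrt μ * a)^2 = μ * a^2 := by
        rw [mul_pow, Real.sq_sqrt hμ]
      have h3 : a^2 ≤ ‖x‖^2 := by
        have h4 : |a| ≤ ‖x‖ := by
          have := abs_real_inner_le_norm x e
          rwa [he, mul_one] at this
        calc a^2 = |a|^2 := (sq_abs a).symm
          _ ≤ ‖x‖^2 := by gcongr
      have hz := hZnn τ hτ x
      nlinarith [mul_le_mul_of_nonneg_right h3 hz, mul_le_mul_of_nonneg_right h1 hz, hμ]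
    calc (∫ x, (1 - Real.cos (Real.sqrt μ * (inner ℝ x e : ℝ))) * Z τ x)
        ≤ ∫ x, μ/2 * (‖x‖^2 * Z τ x) :=
          integral_mono hci ((hZmsd τ hτ).const_mul (μ/2)) hmono
      _ = μ/2 * ∫ x, ‖x‖^2 * Z τ x := integral_const_mul _ _
  -- |s| ≤ 1
  have habs : ∀ τ, 0 < τ → ∀ μ : ℝ, 0 ≤ μ → ∀ e : EuclideanSpace ℝ (Fin d), ‖e‖ = 1 →
      |s τ μ| ≤ 1 := by
    intro τ hτ μ hμ e he
    rw [hrep τ hτ μ hμ e he]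
    have hci : Integrable (fun x => Real.cos (Real.sqrt μ * (inner ℝ x e : ℝ)) * Z τ x) :=
      hcosint τ hτ _ (continuous_const.mul (hcont e))
    calc |∫ x, Real.cos (Real.sqrt μ * (inner ℝ x e : ℝ)) * Z τ x|
        ≤ ∫ x, ‖Real.cos (Real.sqrt μ * (inner ℝ x e : ℝ)) * Z τ x‖ := by
          rw [← Real.norm_eq_abs]
          exact norm_integral_le_integral_norm _
      _ ≤ ∫ x, Z τ x := by
          apply integral_mono hci.norm (hZint τ hτ)
          intro x
          dsimp only
          rw [norm_mul, Real.norm_eq_abs, Real.norm_eq_abs,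
            abs_of_nonneg (hZnn τ hτ x)]
          calc |Real.cos (Real.sqrt μ * (inner ℝ x e : ℝ))| * Z τ x ≤ 1 * Z τ x :=
              mul_le_mul_of_nonneg_right (Real.abs_cos_le_one _) (hZnn τ hτ x)
            _ = Z τ x := one_mul _
      _ = 1 := hZpdf τ hτ
  -- x-DCT: limit of (1 - s t μ)/μ along μ → 0⁺
  have hlimx : ∀ e : EuclideanSpace ℝ (Fin d), ‖e‖ = 1 →
      Tendsto (fun μ : ℝ => (1 - s t μ)/μ) (nhdsWithin 0 (Set.Ioi 0))
        (nhds ((∫ x, (inner ℝ x e : ℝ)^2 * Z t x)/2)) := by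
    intro e he
    have key : Tendsto (fun μ : ℝ => ∫ x,
        ((1 - Real.cos (Real.sqrt μ * (inner ℝ x e : ℝ)))/μ) * Z t x)
        (nhdsWithin 0 (Set.Ioi 0))
        (nhds (∫ x, ((inner ℝ x e : ℝ)^2/2) * Z t x)) := by
      apply tendsto_integral_filter_of_dominated_convergence
        (bound := fun x => 1/2 * (‖x‖^2 * Z t x))
      · filter_upwards with μ
        exact ((((continuous_const.sub (Real.continuous_cos.comp
          (continuous_const.mul (hcont e)))).div_const μ)).aestronglyMeasurable).mul
          (hZm t ht)
      · filter_upwards [self_mem_nhdsWithin] with μ hμ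
        filter_upwards with x
        have hμ' : (0:ℝ) < μ := hμ
        set a := (inner ℝ x e : ℝ) with ha
        have h1 : 0 ≤ 1 - Real.cos (Real.sqrt μ * a) := by
          linarith [Real.cos_le_one (Real.sqrt μ * a)]
        have h2 : 1 - Real.cos (Real.sqrt μ * a) ≤ μ * a^2 / 2 := by
          have := Real.one_sub_sq_div_two_le_cos (x := Real.sqrt μ * a)
          have hsq : (Real.sqrt μ * a)^2 = μ * a^2 := by
            rw [mul_pow, Real.sq_sqrt hμ'.le]
          linarith [this, hsq.le]
        have h3 : a^2 ≤ ‖x‖^2 := by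
          have h4 : |a| ≤ ‖x‖ := by
            have := abs_real_inner_le_norm x e
            rwa [he, mul_one] at this
          calc a^2 = |a|^2 := (sq_abs a).symm
            _ ≤ ‖x‖^2 := by gcongr
        have hz := hZnn t ht x
        rw [norm_mul, Real.norm_eq_abs, Real.norm_eq_abs, abs_of_nonneg hz,
          abs_of_nonneg (by positivity)]
        have h5 : (1 - Real.cos (Real.sqrt μ * a))/μ ≤ ‖x‖^2/2 := by
          rw [div_le_iff₀ hμ']
          nlinarith
        calc (1 - Real.cos (Real.sqrt μ * a))/μ * Z t x ≤ ‖x‖^2/2 * Z t x :=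
            mul_le_mul_of_nonneg_right h5 hz
          _ = 1/2 * (‖x‖^2 * Z t x) := by ring
      · exact (hZmsd t ht).const_mul (1/2)
      · filter_upwards with x
        exact (msd_aux_ptwise ((inner ℝ x e : ℝ))).mul_const (Z t x)
    have heq : ∀ᶠ μ in nhdsWithin (0:ℝ) (Set.Ioi 0),
        (∫ x, ((1 - Real.cos (Real.sqrt μ * (inner ℝ x e : ℝ)))/μ) * Z t x) =
          (1 - s t μ)/μ := by
      filter_upwards [self_mem_nhdsWithin] with μ hμ
      have hμ' : (0:ℝ) < μ := hμ
      rw [h1sub t ht μ hμ'.le e he, ← integral_div]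
      congr 1
      funext x
      ring
    have hval : (∫ x, ((inner ℝ x e : ℝ)^2/2) * Z t x) =
        (∫ x, (inner ℝ x e : ℝ)^2 * Z t x)/2 := by
      rw [← integral_div]
      congr 1
      funext x
      ring
    rw [hval] at key
    exact key.congr' heq
  -- a fixed unit vector
  have he0 : ‖EuclideanSpace.single (⟨0, hd⟩ : Fin d) (1:ℝ)‖ = 1 := by
    rw [EuclideanSpace.norm_single, norm_one]
  set e0 : EuclideanSpace ℝ (Fin d) := EuclideanSpace.single (⟨0, hd⟩ : Fin d) (1:ℝ) with he0def
  set c : ℝ := ∫ x, (inner ℝ x e0 : ℝ)^2 * Z t x with hc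
  have hL : Tendsto (fun μ : ℝ => (1 - s t μ)/μ) (nhdsWithin 0 (Set.Ioi 0)) (nhds (c/2)) :=
    hlimx e0 he0
  -- all directional second moments are equal to c
  have hunit : ∀ i : Fin d, ‖EuclideanSpace.single i (1:ℝ)‖ = 1 := by
    intro i; rw [EuclideanSpace.norm_single, norm_one]
  have hall : ∀ i : Fin d, (∫ x, ((x : EuclideanSpace ℝ (Fin d)) i)^2 * Z t x) = c := by
    intro i
    have h1 := hlimx (EuclideanSpace.single i (1:ℝ)) (hunit i)
    have h2 := tendsto_nhds_unique h1 hL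
    have h3 : (∫ x, (inner ℝ x (EuclideanSpace.single i (1:ℝ)) : ℝ)^2 * Z t x) = c := by
      linarith
    rw [← h3]
    congr 1
    funext x
    rw [EuclideanSpace.inner_single_right]
    norm_num
  -- the mean square displacement equals d * c
  have hinti : ∀ i : Fin d, Integrable (fun x => ((x : EuclideanSpace ℝ (Fin d)) i)^2 * Z t x) := by
    intro i
    refine Integrable.mono (hZmsd t ht) ?_ ?_
    · have hcc : Continuous fun x : EuclideanSpace ℝ (Fin d) =>
          ((inner ℝ x (EuclideanSpace.single i (1:ℝ)) : ℝ))^2 := ((hcont _).pow 2)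
      have : (fun x : EuclideanSpace ℝ (Fin d) => (x i)^2) = fun x =>
          ((inner ℝ x (EuclideanSpace.single i (1:ℝ)) : ℝ))^2 := by
        funext x
        rw [EuclideanSpace.inner_single_right]
        norm_num
      rw [show (fun x : EuclideanSpace ℝ (Fin d) => (x i)^2 * Z t x) = fun x =>
          ((inner ℝ x (EuclideanSpace.single i (1:ℝ)) : ℝ))^2 * Z t x by
        funext x; rw [EuclideanSpace.inner_single_right]; norm_num]
      exact (hcc.aestronglyMeasurable).mul (hZm t ht)
    · filter_upwards with x
      rw [Real.norm_eq_abs, Real.norm_eq_abs,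
        abs_of_nonneg (mul_nonneg (sq_nonneg (x i)) (hZnn t ht x)),
        abs_of_nonneg (mul_nonneg (sq_nonneg ‖x‖) (hZnn t ht x))]
      apply mul_le_mul_of_nonneg_right _ (hZnn t ht x)
      have : |x i| ≤ ‖x‖ := by
        have h4 := abs_real_inner_le_norm x (EuclideanSpace.single i (1:ℝ))
        rw [hunit i, mul_one, EuclideanSpace.inner_single_right] at h4
        simpa using h4
      calc (x i)^2 = |x i|^2 := (sq_abs _).symm
        _ ≤ ‖x‖^2 := by gcongr
  have hmsum : (∫ x, ‖x‖^2 * Z t x) = d * c := by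
    have hns : (fun x : EuclideanSpace ℝ (Fin d) => ‖x‖^2 * Z t x) =
        fun x => ∑ i : Fin d, (x i)^2 * Z t x := by
      funext x
      rw [← Finset.sum_mul]
      congr 1
      rw [EuclideanSpace.norm_eq, Real.sq_sqrt (by positivity)]
      congr 1
      funext i
      rw [Real.norm_eq_abs, sq_abs]
    rw [hns, integral_finset_sum _ (fun i _ => hinti i)]
    simp only [hall]
    rw [Finset.sum_const, Finset.card_univ, Fintype.card_fin]
    simp [nsmul_eq_mul]
  -- positivity of the mean square displacement
  have hmpos : 0 < ∫ x, ‖x‖^2 * Z t x := by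
    rcases lt_or_eq_of_le (integral_nonneg (μ := volume)
      (f := fun x : EuclideanSpace ℝ (Fin d) => ‖x‖^2 * Z t x)
      (fun x => mul_nonneg (sq_nonneg _) (hZnn t ht x))) with h | h
    · exact h
    exfalso
    have hae : (fun x => ‖x‖^2 * Z t x) =ᵐ[volume] 0 := by
      rw [← integral_eq_zero_iff_of_nonneg
        (fun x => mul_nonneg (sq_nonneg _) (hZnn t ht x)) (hZmsd t ht)]
      exact h.symm
    haveI : Nontrivial (EuclideanSpace ℝ (Fin d)) := by
      refine ⟨EuclideanSpace.single ⟨0, hd⟩ (1:ℝ), 0, ?_⟩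
      intro hcontra
      have := congrArg (fun f => f ⟨0,hd⟩) hcontra
      simp [EuclideanSpace.single_apply] at this
    have hsing : ∀ᵐ x : EuclideanSpace ℝ (Fin d) ∂volume, x ≠ 0 := by
      rw [ae_iff]
      have hset : {x : EuclideanSpace ℝ (Fin d) | ¬ x ≠ 0} = {0} := by
        ext x; simp
      rw [hset]
      exact measure_singleton 0
    have hZ0 : Z t =ᵐ[volume] 0 := by
      filter_upwards [hae, hsing] with x hx hxne
      simp only [Pi.zero_apply] at hx ⊢
      have hxn : ‖x‖ ≠ 0 := norm_ne_zero_iff.mpr hxne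
      have : ‖x‖^2 ≠ 0 := pow_ne_zero 2 hxn
      exact (mul_eq_zero.mp hx).resolve_left this
    have : (∫ x, Z t x) = 0 := integral_eq_zero_of_ae hZ0
    rw [hZpdf t ht] at this
    norm_num at this
  have hcpos : 0 < c := by
    have : (0:ℝ) < d := by exact_mod_cast Nat.lt_of_lt_of_le Nat.zero_lt_one hd
    nlinarith [hmsum, hmpos]
  -- relation from the Volterra equation
  have hconv_eq : ∀ μ : ℝ, 0 < μ →
      (∫ τ in (0:ℝ)..t, l (t-τ) * s τ μ) = (1 - s t μ)/μ := by
    intro μ hμ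
    have hv := hvolterra μ hμ.le t ht.le
    field_simp
    linarith
  have hposL : ∀ᶠ μ in nhdsWithin (0:ℝ) (Set.Ioi 0), 0 < (1 - s t μ)/μ :=
    hL.eventually (eventually_gt_nhds (by positivity))
  -- eventual integrability of the convolution integrand
  have hII : ∀ᶠ μ in nhdsWithin (0:ℝ) (Set.Ioi 0),
      IntegrableOn (fun τ => l (t-τ) * s τ μ) (Set.Ioc 0 t) volume := by
    filter_upwards [hposL, self_mem_nhdsWithin] with μ hpos hμ
    by_contra hni
    have hni' : ¬ IntervalIntegrable (fun τ => l (t-τ) * s τ μ) volume 0 t := by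
      rw [intervalIntegrable_iff_integrableOn_Ioc_of_le ht.le]
      exact hni
    have h0 := intervalIntegral.integral_undef hni'
    rw [hconv_eq μ hμ] at h0
    rw [h0] at hpos
    exact lt_irrefl 0 hpos
  -- integrable bound
  have hlb : IntegrableOn (fun τ => ‖l (t-τ)‖) (Set.Ioc 0 t) volume := by
    have h1 : IntervalIntegrable l volume 0 t := by
      rw [intervalIntegrable_iff_integrableOn_Icc_of_le ht.le]
      exact hl_loc.integrableOn_compact_subset Set.Icc_subset_Ici_self isCompact_Icc
    have h2 : IntervalIntegrable (fun τ => l (t - τ)) volume 0 t := by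
      have := (h1.comp_sub_left t).symm
      simpa using this
    have h3 := h2.norm
    rwa [intervalIntegrable_iff_integrableOn_Ioc_of_le ht.le] at h3
  -- τ-DCT
  have hlimτ : Tendsto (fun μ : ℝ => ∫ τ in Set.Ioc 0 t, l (t-τ) * s τ μ)
      (nhdsWithin 0 (Set.Ioi 0)) (nhds (∫ τ in Set.Ioc 0 t, l (t-τ))) := by
    apply tendsto_integral_filter_of_dominated_convergence (bound := fun τ => ‖l (t-τ)‖)
    · filter_upwards [hII] with μ h
      exact h.aestronglyMeasurable
    · filter_upwards [self_mem_nhdsWithin] with μ hμ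
      rw [ae_restrict_iff' measurableSet_Ioc]
      filter_upwards with τ hτ
      have hμ' : (0:ℝ) < μ := hμ
      rw [norm_mul]
      have hs1 : ‖s τ μ‖ ≤ 1 := by
        rw [Real.norm_eq_abs]
        exact habs τ hτ.1 μ hμ'.le e0 he0
      calc ‖l (t-τ)‖ * ‖s τ μ‖ ≤ ‖l (t-τ)‖ * 1 :=
          mul_le_mul_of_nonneg_left hs1 (norm_nonneg _)
        _ = ‖l (t-τ)‖ := mul_one _
    · exact hlb
    · rw [ae_restrict_iff' measurableSet_Ioc]
      filter_upwards with τ hτ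
      have hτ0 : (0:ℝ) < τ := hτ.1
      -- squeeze: s τ μ → 1 as μ → 0⁺
      have hsq : Tendsto (fun μ : ℝ => s τ μ) (nhdsWithin 0 (Set.Ioi 0)) (nhds 1) := by
        have hlow : Tendsto (fun μ : ℝ => 1 - μ/2 * ∫ x, ‖x‖^2 * Z τ x)
            (nhdsWithin 0 (Set.Ioi 0)) (nhds 1) := by
          have h1 : Tendsto (fun μ : ℝ => μ/2 * ∫ x, ‖x‖^2 * Z τ x)
              (nhdsWithin 0 (Set.Ioi 0)) (nhds 0) := by
            have h2 : Tendsto (fun μ : ℝ => μ) (nhdsWithin (0:ℝ) (Set.Ioi 0)) (nhds 0) :=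
              tendsto_id.mono_left nhdsWithin_le_nhds
            have := (h2.div_const 2).mul_const (∫ x, ‖x‖^2 * Z τ x)
            simpa using this
          have := tendsto_const_nhds (α := ℝ) (x := (1:ℝ))
            (f := nhdsWithin (0:ℝ) (Set.Ioi 0)) |>.sub h1
          simpa using this
        apply tendsto_of_tendsto_of_tendsto_of_le_of_le' hlow tendsto_const_nhds
        · filter_upwards [self_mem_nhdsWithin] with μ hμ
          have hμ' : (0:ℝ) < μ := hμ
          have := hub τ hτ0 μ hμ'.le e0 he0
          linarith
        · filter_upwards [self_mem_nhdsWithin] with μ hμ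
          have hμ' : (0:ℝ) < μ := hμ
          have := hb0 τ hτ0 μ hμ'.le e0 he0
          linarith
      have := hsq.const_mul (l (t-τ))
      simpa using this
  -- identify the two limits
  have hset : ∀ μ : ℝ, (∫ τ in (0:ℝ)..t, l (t-τ) * s τ μ) =
      ∫ τ in Set.Ioc 0 t, l (t-τ) * s τ μ := fun μ => intervalIntegral.integral_of_le ht.le
  have hL2 : Tendsto (fun μ : ℝ => (1 - s t μ)/μ) (nhdsWithin 0 (Set.Ioi 0))
      (nhds (∫ τ in Set.Ioc 0 t, l (t-τ))) := by
    refine hlimτ.congr' ?_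
    filter_upwards [self_mem_nhdsWithin] with μ hμ
    have hμ' : (0:ℝ) < μ := hμ
    rw [← hset μ, hconv_eq μ hμ']
  have hkey : c/2 = ∫ τ in Set.Ioc 0 t, l (t-τ) := tendsto_nhds_unique hL hL2
  have hlint : (∫ τ in Set.Ioc 0 t, l (t-τ)) = ∫ τ in (0:ℝ)..t, l τ := by
    rw [← intervalIntegral.integral_of_le ht.le]
    have := intervalIntegral.integral_comp_sub_left l t (a := 0) (b := t)
    simpa using this
  rw [hmsum]
  rw [hlint] at hkey
  rw [show c = 2 * ∫ τ in (0:ℝ)..t, l τ by linarith]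
  ring
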